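/- For nonnegative integers n, k with n ≥ k, the degenerate central factorial polynomials of the second kind satisfy T_{2,λ}(n,k|x) = Σ_{l=k}^n C(n,l)·T_{2,λ}(l,k)·(x)_{n-l,λ}, where (x)_{m,λ} = x(x-λ)(x-2λ)⋯(x-(m-1)λ) is the λ-falling factorial. -/

import Mathlib

open scoped ContDiff

noncomputable def T2 (lam x : ℝ) (n k : ℕ) : ℝ :=
  iteratedDeriv n (fun t : ℝ =>
    (k.factorial : ℝ)⁻¹ * (1 + lam * t) ^ (x / lam) *
      ((1 + lam * t) ^ (1 / (2 * lam)) - (1 + lam * t) ^ (-(1 / (2 * lam)))) ^ k) 0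

noncomputable def dfall (lam x : ℝ) (n : ℕ) : ℝ := ∏ i ∈ Finset.range n, (x - i * lam)

private lemma idw_of_isOpen {f : ℝ → ℝ} {s : Set ℝ} (hs : IsOpen s) {x : ℝ} (hx : x ∈ s)
    (n : ℕ) : iteratedDerivWithin n f s x = iteratedDeriv n f x := by
  simp only [iteratedDerivWithin, iteratedDeriv, iteratedFDerivWithin_of_isOpen n hs hx]

private lemma pascal_sum (F G : ℕ → ℝ) (n : ℕ) :
    (∑ l ∈ Finset.range (n+1), (n.choose l : ℝ) * F (l+1) * G (n-l))
      + ∑ l ∈ Finset.range (n+1), (n.choose l : ℝ) * F l * G (n+1-l)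
    = ∑ l ∈ Finset.range (n+2), ((n+1).choose l : ℝ) * F l * G (n+1-l) := by
  have key : ∑ l ∈ Finset.range (n+2), ((n+1).choose l : ℝ) * F l * G (n+1-l)
      = (∑ l ∈ Finset.range (n+1), ((n+1).choose (l+1) : ℝ) * F (l+1) * G (n-l))
        + F 0 * G (n+1) := by
    rw [Finset.sum_range_succ']
    simp [Nat.succ_sub_succ]
  have key2 : ∑ l ∈ Finset.range (n+2), (n.choose l : ℝ) * F l * G (n+1-l)
      = (∑ l ∈ Finset.range (n+1), (n.choose (l+1) : ℝ) * F (l+1) * G (n-l))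
        + F 0 * G (n+1) := by
    rw [Finset.sum_range_succ']
    simp [Nat.succ_sub_succ]
  have key3 : ∑ l ∈ Finset.range (n+2), (n.choose l : ℝ) * F l * G (n+1-l)
      = ∑ l ∈ Finset.range (n+1), (n.choose l : ℝ) * F l * G (n+1-l) := by
    rw [Finset.sum_range_succ]
    simp
  have key4 : ∀ l ∈ Finset.range (n+1), ((n+1).choose (l+1) : ℝ) * F (l+1) * G (n-l)
      = (n.choose l : ℝ) * F (l+1) * G (n-l) + (n.choose (l+1) : ℝ) * F (l+1) * G (n-l) := by
    intro l _
    rw [Nat.choose_succ_succ]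
    push_cast
    ring
  rw [key, Finset.sum_congr rfl key4, Finset.sum_add_distrib]
  linarith [key2, key3]

private lemma leibniz {s : Set ℝ} (hu : UniqueDiffOn ℝ s) {x : ℝ} (hx : x ∈ s) :
    ∀ (n : ℕ) (f g : ℝ → ℝ), ContDiffOn ℝ ∞ f s → ContDiffOn ℝ ∞ g s →
    iteratedDerivWithin n (fun t => f t * g t) s x
      = ∑ l ∈ Finset.range (n+1), (n.choose l : ℝ) * iteratedDerivWithin l f s x *
          iteratedDerivWithin (n-l) g s x := by
  intro n
  induction n with
  | zero => intro f g _ _; simp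
  | succ n IH =>
    intro f g hf hg
    have hinf : (∞ : WithTop ℕ∞) + 1 ≤ ∞ := le_of_eq rfl
    have hf' : ContDiffOn ℝ ∞ (derivWithin f s) s := hf.derivWithin hu hinf
    have hg' : ContDiffOn ℝ ∞ (derivWithin g s) s := hg.derivWithin hu hinf
    rw [iteratedDerivWithin_succ']
    have hEq : Set.EqOn (derivWithin (fun t => f t * g t) s)
        (fun t => derivWithin f s t * g t + f t * derivWithin g s t) s := by
      intro y hy
      exact derivWithin_mul
        ((hf.differentiableOn (by norm_num)) y hy)
        ((hg.differentiableOn (by norm_num)) y hy)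
    rw [iteratedDerivWithin_congr hEq hx]
    have hadd : iteratedDerivWithin n
        (fun t => derivWithin f s t * g t + f t * derivWithin g s t) s x
        = iteratedDerivWithin n (fun t => derivWithin f s t * g t) s x
          + iteratedDerivWithin n (fun t => f t * derivWithin g s t) s x := by
      have := iteratedDerivWithin_add (n := n) hx hu
        (f := fun t => derivWithin f s t * g t) (g := fun t => f t * derivWithin g s t)
        (((hf'.mul hg).contDiffWithinAt hx).of_le (mod_cast le_top)) (((hf.mul hg').contDiffWithinAt hx).of_le (mod_cast le_top))
      simpa [Pi.add_def] using this
    rw [hadd, IH _ _ hf' hg, IH _ _ hf hg']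
    have e1 : ∀ l ∈ Finset.range (n+1),
        (n.choose l : ℝ) * iteratedDerivWithin l (derivWithin f s) s x *
          iteratedDerivWithin (n-l) g s x
        = (n.choose l : ℝ) * iteratedDerivWithin (l+1) f s x *
          iteratedDerivWithin (n-l) g s x := by
      intro l _
      rw [iteratedDerivWithin_succ']
    have e2 : ∀ l ∈ Finset.range (n+1),
        (n.choose l : ℝ) * iteratedDerivWithin l f s x *
          iteratedDerivWithin (n-l) (derivWithin g s) s x
        = (n.choose l : ℝ) * iteratedDerivWithin l f s x *
          iteratedDerivWithin (n+1-l) g s x := by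
      intro l hl
      have : n + 1 - l = (n - l) + 1 := by
        have := Finset.mem_range.mp hl; omega
      rw [this, iteratedDerivWithin_succ']
    rw [Finset.sum_congr rfl e1, Finset.sum_congr rfl e2]
    exact pascal_sum (fun l => iteratedDerivWithin l f s x)
      (fun l => iteratedDerivWithin l g s x) n

theorem T2_poly_expansion (lam x : ℝ) (hlam : lam ≠ 0) (n k : ℕ) (h : k ≤ n) :
    T2 lam x n k
      = ∑ l ∈ Finset.Icc k n, (n.choose l : ℝ) * T2 lam 0 l k * dfall lam x (n - l) := by
  set s : Set ℝ := {t : ℝ | 0 < 1 + lam * t} with hs_def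
  have hs : IsOpen s := isOpen_lt continuous_const (by fun_prop)
  have h0 : (0:ℝ) ∈ s := by simp [hs_def]
  have hu : UniqueDiffOn ℝ s := hs.uniqueDiffOn
  have hpos : ∀ y ∈ s, (0:ℝ) < 1 + lam * y := fun y hy => hy
  -- smoothness of the basic power functions
  have hP : ∀ c : ℝ, ContDiffOn ℝ ∞ (fun t => (1 + lam * t) ^ c) s := by
    intro c y hy
    exact (((contDiff_const.add (contDiff_const.mul contDiff_id)).contDiffAt).rpow_const_of_ne
      (ne_of_gt (hpos y hy))).contDiffWithinAt
  -- derivative formula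
  have hd : ∀ (c : ℝ) (y : ℝ), y ∈ s →
      derivWithin (fun t => (1 + lam * t) ^ c) s y = (lam * c) * (1 + lam * y) ^ (c - 1) := by
    intro c y hy
    have h1 : HasDerivAt (fun t : ℝ => 1 + lam * t) lam y := by
      simpa using ((hasDerivAt_id y).const_mul lam).const_add 1
    have h2 := h1.rpow_const (p := c) (Or.inl (ne_of_gt (hpos y hy)))
    exact h2.hasDerivWithinAt.derivWithin (hu.uniqueDiffWithinAt hy)
  -- Lemma B : iterated derivatives of (1+λt)^{x/λ} give falling factorials
  have hB : ∀ (m : ℕ) (z : ℝ),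
      iteratedDerivWithin m (fun t => (1 + lam * t) ^ (z / lam)) s 0 = dfall lam z m := by
    intro m
    induction m with
    | zero => intro z; simp [dfall]
    | succ m IH =>
      intro z
      rw [iteratedDerivWithin_succ']
      have hEq : Set.EqOn (derivWithin (fun t => (1 + lam * t) ^ (z / lam)) s)
          (fun t => z * (1 + lam * t) ^ ((z - lam) / lam)) s := by
        intro y hy
        rw [hd _ y hy]
        have e1 : lam * (z / lam) = z := by field_simp
        have e2 : z / lam - 1 = (z - lam) / lam := by field_simp
        rw [e1, e2]
      rw [iteratedDerivWithin_congr hEq h0,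
        iteratedDerivWithin_const_mul (n := m) h0 hu z (((hP ((z - lam)/lam)).contDiffWithinAt h0).of_le (mod_cast le_top)), IH]
      have hrec : dfall lam z (m+1) = z * dfall lam (z - lam) m := by
        unfold dfall
        rw [Finset.prod_range_succ']
        simp only [Nat.cast_zero, zero_mul, sub_zero]
        rw [mul_comm]
        congr 1
        exact Finset.prod_congr rfl fun i _ => by push_cast; ring
      rw [hrec]
  -- the "ψ" function
  set ψ : ℝ → ℝ := fun t => (1 + lam * t) ^ (1 / (2 * lam)) - (1 + lam * t) ^ (-(1 / (2 * lam)))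
    with hψ_def
  have hψs : ContDiffOn ℝ ∞ ψ s := (hP _).sub (hP _)
  have hψ0 : ψ 0 = 0 := by simp [hψ_def]
  -- Lemma C : low-order derivatives of ψ^k vanish at 0
  have hvan : ∀ (k' l : ℕ), l < k' → iteratedDerivWithin l (fun t => ψ t ^ k') s 0 = 0 := by
    intro k'
    induction k' with
    | zero => intro l hl; omega
    | succ k' IH =>
      intro l hl
      have : (fun t => ψ t ^ (k' + 1)) = fun t => ψ t * ψ t ^ k' := by
        funext t; ring
      rw [this, leibniz hu h0 l ψ (fun t => ψ t ^ k') hψs (hψs.pow k')]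
      refine Finset.sum_eq_zero fun j hj => ?_
      rcases Nat.eq_zero_or_pos j with hj0 | hj1
      · subst hj0
        simp [hψ0]
      · have hjl : j ≤ l := by have := Finset.mem_range.mp hj; omega
        have : l - j < k' := by omega
        rw [IH _ this, mul_zero]
  -- the two factors
  set g₂ : ℝ → ℝ := fun t => (k.factorial : ℝ)⁻¹ * ψ t ^ k with hg₂_def
  have hg₂s : ContDiffOn ℝ ∞ g₂ s := contDiffOn_const.mul (hψs.pow k)
  -- express T2 lam 0 l k via g₂
  have hT0 : ∀ l : ℕ, T2 lam 0 l k = iteratedDerivWithin l g₂ s 0 := by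
    intro l
    rw [T2, ← idw_of_isOpen hs h0]
    congr 1
    funext t
    rw [zero_div, Real.rpow_zero, hg₂_def, hψ_def]
    ring
  have hT0zero : ∀ l, l < k → T2 lam 0 l k = 0 := by
    intro l hl
    rw [hT0 l, hg₂_def,
      iteratedDerivWithin_const_mul (n := l) h0 hu _ (((hψs.pow k).contDiffWithinAt h0).of_le (mod_cast le_top)), hvan k l hl, mul_zero]
  -- main computation
  have hmain : T2 lam x n k
      = ∑ l ∈ Finset.range (n+1), (n.choose l : ℝ) * T2 lam 0 l k * dfall lam x (n - l) := by
    have hfun : (fun t : ℝ =>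
        (k.factorial : ℝ)⁻¹ * (1 + lam * t) ^ (x / lam) *
          ((1 + lam * t) ^ (1 / (2 * lam)) - (1 + lam * t) ^ (-(1 / (2 * lam)))) ^ k)
        = fun t => g₂ t * (1 + lam * t) ^ (x / lam) := by
      funext t
      rw [hg₂_def, hψ_def]
      ring
    rw [T2, hfun, ← idw_of_isOpen hs h0,
      leibniz hu h0 n g₂ (fun t => (1 + lam * t) ^ (x / lam)) hg₂s (hP _)]
    refine Finset.sum_congr rfl fun l _ => ?_
    rw [hB (n - l) x, hT0 l]
  rw [hmain]
  refine (Finset.sum_subset ?_ ?_).symm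
  · intro l hl
    rw [Finset.mem_Icc] at hl
    rw [Finset.mem_range]
    omega
  · intro l hl hnot
    rw [Finset.mem_range] at hl
    rw [Finset.mem_Icc] at hnot
    have : l < k := by omega
    rw [hT0zero l this]
    ring
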